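/- The double cross product X(u,v) = uv + ⟨u,v⟩e_0 on the imaginary octonions satisfies the axioms of a 2-fold cross product: ⟨X(u,v), u⟩ = 0, ⟨X(u,v), v⟩ = 0, and ‖X(u,v)‖² = ‖u‖²‖v‖² - ⟨u,v⟩² for all u, v ∈ Im 𝕆. -/

import Mathlib

open scoped RealInnerProductSpace

noncomputable section

abbrev Oct : Type := EuclideanSpace ℝ (Fin 8)

def octe (i : Fin 8) : Oct := EuclideanSpace.single i 1

def plusTriples : List (Fin 8 × Fin 8 × Fin 8) :=
  [(1,2,3),(1,4,5),(1,7,6),(2,4,6),(2,5,7),(3,4,7),(3,6,5)]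

/-- Completely skew-symmetric structure tensor taking the value `+1` on the
triples 123, 145, 176, 246, 257, 347, 365. -/
def eps (i j k : Fin 8) : ℝ :=
  if plusTriples.any (fun t => decide ((i,j,k) = t ∨ (i,j,k) = (t.2.1, t.2.2, t.1) ∨
      (i,j,k) = (t.2.2, t.1, t.2.1))) then 1
  else if plusTriples.any (fun t => decide ((i,j,k) = (t.1, t.2.2, t.2.1) ∨
      (i,j,k) = (t.2.2, t.2.1, t.1) ∨ (i,j,k) = (t.2.1, t.1, t.2.2))) then -1
  else 0

/-- Structure constants of octonion multiplication:
`e_0 e_i = e_i e_0 = e_i` and `e_i e_j = -δ_ij e_0 + ε_ijk e_k` for `i,j ≥ 1`. -/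
def structC (i j k : Fin 8) : ℝ :=
  if i = 0 then (if j = k then 1 else 0)
  else if j = 0 then (if i = k then 1 else 0)
  else (if i = j ∧ k = 0 then (-1:ℝ) else 0) + eps i j k

/-- Octonion multiplication on ℝ⁸. -/
def octMul (x y : Oct) : Oct := WithLp.toLp 2 (fun k => ∑ i, ∑ j, x i * y j * structC i j k)

/-- Octonionic conjugation. -/
def octConj (x : Oct) : Oct := WithLp.toLp 2 (fun k => if k = 0 then x 0 else -(x k))

/-- The triple cross product `X(u,v,w) = -u(v̄w) + ⟨u,v⟩w + ⟨v,w⟩u - ⟨w,u⟩v`. -/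
def X3 (u v w : Oct) : Oct :=
  -octMul u (octMul (octConj v) w) + ⟪u, v⟫ • w + ⟪v, w⟫ • u - ⟪w, u⟫ • v

/-- The double cross product `u × v = uv + ⟨u,v⟩ e_0` (on imaginary octonions). -/
def cross2 (u v : Oct) : Oct := octMul u v + ⟪u, v⟫ • octe 0

set_option maxHeartbeats 1000000 in
theorem stmt4 (u v : Oct) (hu0 : u 0 = 0) (hv0 : v 0 = 0) :
    ⟪cross2 u v, u⟫ = 0 ∧ ⟪cross2 u v, v⟫ = 0 ∧
    ‖cross2 u v‖ ^ 2 = ‖u‖ ^ 2 * ‖v‖ ^ 2 - ⟪u, v⟫ ^ 2 := by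
  have hinner : ∀ x y : Oct, ⟪x, y⟫ = ∑ i, x i * y i := by
    intro x y
    simp [PiLp.inner_apply, RCLike.inner_apply, mul_comm]
  have hcross : ∀ k, cross2 u v k =
      (∑ i, ∑ j, u i * v j * structC i j k) + (∑ i, u i * v i) * octe 0 k := by
    intro k
    simp [cross2, octMul, octe, hinner]
    try ring
  have h0 : cross2 u v 0 = 0 := by
    rw [hcross]
    simp only [Fin.sum_univ_eight, hu0, hv0, octe, EuclideanSpace.single_apply]
    simp (config := { decide := true }) [structC, eps, plusTriples]
    try ring
  have h1 : cross2 u v 1 = u 2 * v 3 - u 3 * v 2 + u 4 * v 5 - u 5 * v 4 - u 6 * v 7 + u 7 * v 6 := by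
    rw [hcross]
    simp only [Fin.sum_univ_eight, hu0, hv0, octe, EuclideanSpace.single_apply]
    simp (config := { decide := true }) [structC, eps, plusTriples]
    try ring
  have h2 : cross2 u v 2 = -u 1 * v 3 + u 3 * v 1 + u 4 * v 6 + u 5 * v 7 - u 6 * v 4 - u 7 * v 5 := by
    rw [hcross]
    simp only [Fin.sum_univ_eight, hu0, hv0, octe, EuclideanSpace.single_apply]
    simp (config := { decide := true }) [structC, eps, plusTriples]
    try ring
  have h3 : cross2 u v 3 = u 1 * v 2 - u 2 * v 1 + u 4 * v 7 - u 5 * v 6 + u 6 * v 5 - u 7 * v 4 := by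
    rw [hcross]
    simp only [Fin.sum_univ_eight, hu0, hv0, octe, EuclideanSpace.single_apply]
    simp (config := { decide := true }) [structC, eps, plusTriples]
    try ring
  have h4 : cross2 u v 4 = -u 1 * v 5 - u 2 * v 6 - u 3 * v 7 + u 5 * v 1 + u 6 * v 2 + u 7 * v 3 := by
    rw [hcross]
    simp only [Fin.sum_univ_eight, hu0, hv0, octe, EuclideanSpace.single_apply]
    simp (config := { decide := true }) [structC, eps, plusTriples]
    try ring
  have h5 : cross2 u v 5 = u 1 * v 4 - u 2 * v 7 + u 3 * v 6 - u 4 * v 1 - u 6 * v 3 + u 7 * v 2 := by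
    rw [hcross]
    simp only [Fin.sum_univ_eight, hu0, hv0, octe, EuclideanSpace.single_apply]
    simp (config := { decide := true }) [structC, eps, plusTriples]
    try ring
  have h6 : cross2 u v 6 = u 1 * v 7 + u 2 * v 4 - u 3 * v 5 - u 4 * v 2 + u 5 * v 3 - u 7 * v 1 := by
    rw [hcross]
    simp only [Fin.sum_univ_eight, hu0, hv0, octe, EuclideanSpace.single_apply]
    simp (config := { decide := true }) [structC, eps, plusTriples]
    try ring
  have h7 : cross2 u v 7 = -u 1 * v 6 + u 2 * v 5 + u 3 * v 4 - u 4 * v 3 - u 5 * v 2 + u 6 * v 1 := by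
    rw [hcross]
    simp only [Fin.sum_univ_eight, hu0, hv0, octe, EuclideanSpace.single_apply]
    simp (config := { decide := true }) [structC, eps, plusTriples]
    try ring
  refine ⟨?_, ?_, ?_⟩
  · rw [hinner]
    simp only [Fin.sum_univ_eight, h0, h1, h2, h3, h4, h5, h6, h7, hu0]
    ring
  · rw [hinner]
    simp only [Fin.sum_univ_eight, h0, h1, h2, h3, h4, h5, h6, h7, hv0]
    ring
  · rw [← real_inner_self_eq_norm_sq, ← real_inner_self_eq_norm_sq,
      ← real_inner_self_eq_norm_sq, hinner, hinner, hinner, hinner]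
    simp only [Fin.sum_univ_eight, h0, h1, h2, h3, h4, h5, h6, h7, hu0, hv0]
    ring
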